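/- For every utility vector u : ι → ℝ and every marginal-cost vector c : ι → ℝ, the value max(max_{i ∈ ι}(u i − c i), 0) is the greatest element of the set of social-welfare values w for which there exist prices p : ι → ℝ and a user-optimal decision d for (p, u) whose social welfare equals w. (Paper's Theorem 1: the maximum value of social welfare over all pricing strategies is max{max_{l,t}(u_{l,t} − v_{l,t} + v_{−k}), 0}.) -/

import Mathlib

open Finset

/-- A decision `d` is user-optimal for prices `p` and utilities `u`:
if the user accepts option `i`, it has nonnegative payoff and maximal payoff among all options;
if the user rejects all options, every option has negative payoff. -/
def userOptimal {ι : Type*} [Fintype ι] (p u : ι → ℝ) : Option ι → Prop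
  | some i => 0 ≤ u i - p i ∧ ∀ j, u j - p j ≤ u i - p i
  | none => ∀ j, u j - p j < 0

/-- Social welfare of a decision: `u i - c i` if option `i` is accepted, `0` otherwise. -/
def welfare {ι : Type*} (c u : ι → ℝ) : Option ι → ℝ
  | some i => u i - c i
  | none => 0

/-- The maximum value of social welfare over all pricing strategies is
`max (max_i (u i - c i)) 0`. -/
theorem max_social_welfare {ι : Type*} [Fintype ι] [Nonempty ι] (u c : ι → ℝ) :
    IsGreatest
      {w : ℝ | ∃ (p : ι → ℝ) (d : Option ι), userOptimal p u d ∧ welfare c u d = w}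
      (max (univ.sup' univ_nonempty (fun i => u i - c i)) 0) := by
  constructor
  · -- membership
    set M := univ.sup' univ_nonempty (fun i => u i - c i) with hM
    obtain ⟨i, -, hi⟩ := exists_mem_eq_sup' univ_nonempty (fun i => u i - c i)
    rcases le_or_gt 0 M with h0 | h0
    · refine ⟨c, some i, ⟨?_, ?_⟩, ?_⟩
      · rw [hM, hi] at h0; exact h0
      · intro j
        rw [← hi]
        exact le_sup' (fun i => u i - c i) (mem_univ j)
      · simp [welfare, max_eq_left h0, ← hi]; exact hM.symm
    · refine ⟨c, none, ?_, ?_⟩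
      · intro j
        calc u j - c j ≤ M := le_sup' (fun i => u i - c i) (mem_univ j)
        _ < 0 := h0
      · simp [welfare, max_eq_right h0.le]
  · rintro w ⟨p, d, hopt, rfl⟩
    cases d with
    | none => simp [welfare]
    | some i =>
      calc welfare c u (some i) = u i - c i := rfl
      _ ≤ univ.sup' univ_nonempty (fun i => u i - c i) := le_sup' (fun i => u i - c i) (mem_univ i)
      _ ≤ _ := le_max_left _ _
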